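/- Let A = {a_1 < a_2 < ... < a_n} be a convex set in ℝ, and suppose a real number d has two representations d = a_{j+k} - a_j = a_{j'+k'} - a_{j'} with integers k > k' ≥ 1 and valid indices (j + k ≤ n and j' + k' ≤ n). Then j' ≥ j + 2. -/
import Mathlib

lemma gap_mono_aux (n : ℕ) (a : ℕ → ℝ)
    (hconv : ∀ i, 2 ≤ i → i ≤ n - 1 → a i - a (i - 1) < a (i + 1) - a i)
    (p q : ℕ) (hp : 1 ≤ p) (hpq : p ≤ q) (hq : q + 1 ≤ n) :
    a (p + 1) - a p ≤ a (q + 1) - a q := by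
  induction q, hpq using Nat.le_induction with
  | base => exact le_refl _
  | succ m hm ih =>
    have h1 : a (m + 1) - a m ≤ a (m + 1 + 1) - a (m + 1) := by
      have := hconv (m + 1) (by omega) (by omega)
      simp at this
      linarith
    have h2 := ih (by omega)
    linarith

lemma shift_mono_aux (n : ℕ) (a : ℕ → ℝ)
    (hconv : ∀ i, 2 ≤ i → i ≤ n - 1 → a i - a (i - 1) < a (i + 1) - a i)
    (p q m : ℕ) (hp : 1 ≤ p) (hpq : p ≤ q) (hq : q + m ≤ n) :
    a (p + m) - a p ≤ a (q + m) - a q := by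
  induction m with
  | zero => simp
  | succ t ih =>
    have h1 := ih (by omega)
    have h2 := gap_mono_aux n a hconv (p + t) (q + t) (by omega) (by omega) (by omega)
    have e1 : p + (t + 1) = p + t + 1 := by omega
    have e2 : q + (t + 1) = q + t + 1 := by omega
    rw [e1, e2]
    linarith

lemma strict_mono_aux (n : ℕ) (a : ℕ → ℝ)
    (hmono : ∀ i, 1 ≤ i → i < n → a i < a (i + 1))
    (p q : ℕ) (hp : 1 ≤ p) (hpq : p < q) (hq : q ≤ n) :
    a p < a q := by
  induction q, hpq using Nat.le_induction with
  | base => exact hmono p hp (by omega)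
  | succ m hm ih =>
    have := hmono m (by omega) (by omega)
    have := ih (by omega)
    linarith

/-- If `A = {a_1 < ... < a_n}` is convex and `d = a_{j+k} - a_j = a_{j'+k'} - a_{j'}`
with `k > k' ≥ 1`, `j + k ≤ n` and `j' + k' ≤ n`, then `j' ≥ j + 2`. -/
theorem convex_claim_index_gap (n : ℕ) (a : ℕ → ℝ)
    (hmono : ∀ i, 1 ≤ i → i < n → a i < a (i + 1))
    (hconv : ∀ i, 2 ≤ i → i ≤ n - 1 → a i - a (i - 1) < a (i + 1) - a i)
    (d : ℝ) (j j' k k' : ℕ)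
    (hk' : 1 ≤ k') (hkk' : k' < k)
    (hj : 1 ≤ j) (hj' : 1 ≤ j')
    (hjk : j + k ≤ n) (hj'k' : j' + k' ≤ n)
    (hd : a (j + k) - a j = d) (hd' : a (j' + k') - a j' = d) :
    j + 2 ≤ j' := by
  by_contra h
  push_neg at h
  -- j' ≤ j + 1 ≤ j + (k - k')
  have hle : j' ≤ j + (k - k') := by omega
  have hshift := shift_mono_aux n a hconv j' (j + (k - k')) k' hj' hle (by omega)
  have heq : j + (k - k') + k' = j + k := by omega
  rw [heq] at hshift
  have hpos : a j < a (j + (k - k')) := strict_mono_aux n a hmono j (j + (k - k')) hj (by omega) (by omega)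
  linarith
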